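/- Suppose π is a d^p probability tensor corresponding to a weakly hierarchical log-linear model θ, with C_θ^{(j)} ≠ ∅ for all j ∈ V. For H = (H_1,…,H_p) ∈ ℋ and l ∈ V, set W_l = { j ∈ V∖{l} : |H_j| = d−1 } and W̄_l = V ∖ W_l. Then rnk⁺_P(π) ≤ min over H ∈ ℋ and l ∈ V of [ ∏_{j∈V} ( |H_j| + 1 ) − ( ∏_{j∈W_l} ( |H_j| + 1 ) ) · ( ∏_{j∈W̄_l} |H_j| ) ]. -/

import Mathlib

/-- A nonnegative PARAFAC decomposition with `m` terms. -/
def IsParafacDecomp {p : ℕ} {d : Fin p → ℕ}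
    (M : ((j : Fin p) → Fin (d j)) → ℝ) (m : ℕ) : Prop :=
  ∃ lam : Fin m → (j : Fin p) → Fin (d j) → ℝ,
    (∀ h j c, 0 ≤ lam h j c) ∧
    ∀ i : (j : Fin p) → Fin (d j), M i = ∑ h : Fin m, ∏ j : Fin p, lam h j (i j)

/-- The nonnegative PARAFAC rank. -/
noncomputable def parafacRank {p : ℕ} {d : Fin p → ℕ}
    (M : ((j : Fin p) → Fin (d j)) → ℝ) : ℕ :=
  sInf {m | IsParafacDecomp M m}

/-- The probability tensor of the log-linear model `θ`:
`π i = exp (∑_{E ⊆ V} θ_E(i_E))`, normalized so that the entries sum to one. -/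
noncomputable def loglinTensor {p : ℕ} {d : Fin p → ℕ}
    (θ : Finset (Fin p) → ((j : Fin p) → Fin (d j)) → ℝ) :
    ((j : Fin p) → Fin (d j)) → ℝ :=
  fun i => Real.exp (∑ E : Finset (Fin p), θ E i) /
    ∑ i' : (j : Fin p) → Fin (d j), Real.exp (∑ E : Finset (Fin p), θ E i')

namespace ParafacAux

variable {p d : ℕ}

/-- Pattern type: for each variable, either a fixed level in `H j` or `none` (free). -/
abbrev Pat (H : Fin p → Finset (Fin d)) := ∀ j : Fin p, Option {c : Fin d // c ∈ H j}

/-- A pattern is special (w.r.t. `l`) if all its free coordinates other than `l`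
have `|H j| = d - 1`. -/
def spec (H : Fin p → Finset (Fin d)) (l : Fin p) (z : Pat H) : Prop :=
  ∀ j : Fin p, j ≠ l → z j = none → (H j).card = d - 1

instance (H : Fin p → Finset (Fin d)) (l : Fin p) (z : Pat H) : Decidable (spec H l z) := by
  unfold spec; infer_instance

/-- The box (per-coordinate cell set) of a kept pattern. -/
def Bz (H : Fin p → Finset (Fin d)) (l : Fin p) (z : Pat H) (j : Fin p) : Finset (Fin d) :=
  match z j with
  | some c => {c.1}
  | none => if j = l ∧ spec H l z then Finset.univ else (H j)ᶜ

/-- Varying coordinates of a pattern. -/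
def varz (H : Fin p → Finset (Fin d)) (l : Fin p) (z : Pat H) (j : Fin p) : Prop :=
  z j = none ∧ (j = l ∨ ¬ spec H l z)

instance (H : Fin p → Finset (Fin d)) (l : Fin p) (z : Pat H) (j : Fin p) :
    Decidable (varz H l z j) := by unfold varz; infer_instance

def covers (H : Fin p → Finset (Fin d)) (l : Fin p) (z : Pat H) (i : Fin p → Fin d) : Prop :=
  ∀ j, i j ∈ Bz H l z j

instance (H : Fin p → Finset (Fin d)) (l : Fin p) (z : Pat H) (i : Fin p → Fin d) :
    Decidable (covers H l z i) := by unfold covers; infer_instance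

/-- Kept patterns. -/
def kept (H : Fin p → Finset (Fin d)) (l : Fin p) (z : Pat H) : Prop :=
  ∃ j : Fin p, (j = l ∨ (H j).card ≠ d - 1) ∧ z j = none

instance (H : Fin p → Finset (Fin d)) (l : Fin p) (z : Pat H) : Decidable (kept H l z) := by
  unfold kept; infer_instance

section lemmas

variable {H : Fin p → Finset (Fin d)} {l : Fin p} {z : Pat H}

lemma not_spec_of_varz {j j' : Fin p} (hj : varz H l z j) (hj' : varz H l z j')
    (hne : j ≠ j') : ¬ spec H l z := by
  intro hs
  rcases hj.2 with rfl | h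
  · rcases hj'.2 with h' | h'
    · exact hne h'.symm
    · exact h' hs
  · exact h hs

lemma not_mem_H_of_varz {j : Fin p} (hj : varz H l z j) (hns : ¬ spec H l z)
    {x : Fin p → Fin d} (hx : x j ∈ Bz H l z j) : x j ∉ H j := by
  have h1 := hj.1
  unfold Bz at hx
  rw [h1] at hx
  simp only [hns, and_false, if_false] at hx
  simpa using hx

/-- Non-varying coordinates have subsingleton boxes (needs `1 ≤ d`). -/
lemma eq_of_not_varz (hd : 1 ≤ d) {j : Fin p} (hj : ¬ varz H l z j)
    {x y : Fin d} (hx : x ∈ Bz H l z j) (hy : y ∈ Bz H l z j) : x = y := by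
  unfold Bz at hx hy
  cases hz : z j with
  | some c =>
    rw [hz] at hx hy
    simp only [Finset.mem_singleton] at hx hy
    rw [hx, hy]
  | none =>
    rw [hz] at hx hy
    unfold varz at hj
    push_neg at hj
    have h2 := hj hz
    have hjl : j ≠ l := h2.1
    have hs : spec H l z := h2.2
    have hcond : ¬ (j = l ∧ spec H l z) := fun h => hjl h.1
    rw [if_neg hcond] at hx hy
    have hcard : (H j).card = d - 1 := hs j hjl hz
    have hc1 : ((H j)ᶜ).card = 1 := by
      rw [Finset.card_compl, Fintype.card_fin, hcard]
      have hle : (H j).card ≤ d := by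
        simpa using Finset.card_le_card (Finset.subset_univ (H j))
      omega
    obtain ⟨a, ha⟩ := Finset.card_eq_one.mp hc1
    rw [ha] at hx hy
    simp only [Finset.mem_singleton] at hx hy
    rw [hx, hy]

end lemmas

end ParafacAux

namespace ParafacAux

variable {p d : ℕ}

/-- The special condition for a cell. -/
def sp (H : Fin p → Finset (Fin d)) (l : Fin p) (i : Fin p → Fin d) : Prop :=
  ∀ j : Fin p, j ≠ l → i j ∉ H j → (H j).card = d - 1

instance (H : Fin p → Finset (Fin d)) (l : Fin p) (i : Fin p → Fin d) : Decidable (sp H l i) := by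
  unfold sp; infer_instance

/-- The canonical pattern covering a cell. -/
def canon (H : Fin p → Finset (Fin d)) (l : Fin p) (i : Fin p → Fin d) : Pat H := fun j =>
  if hj : j = l then
    if hl : i j ∈ H j then
      if sp H l i then none else some ⟨i j, hl⟩
    else none
  else if h : i j ∈ H j then some ⟨i j, h⟩ else none

section canon

variable {H : Fin p → Finset (Fin d)} {l : Fin p} {i : Fin p → Fin d}

lemma canon_none_iff {j : Fin p} (hj : j ≠ l) :
    canon H l i j = none ↔ i j ∉ H j := by
  simp only [canon, dif_neg hj]
  by_cases h : i j ∈ H j <;> simp [h]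

lemma spec_canon : spec H l (canon H l i) ↔ sp H l i := by
  constructor
  · intro hs j hj hij
    exact hs j hj ((canon_none_iff hj).mpr hij)
  · intro hs j hj hn
    exact hs j hj ((canon_none_iff hj).mp hn)

lemma covers_canon : covers H l (canon H l i) i := by
  intro j
  by_cases hj : j = l
  · subst hj
    by_cases hl : i j ∈ H j
    · by_cases hsp : sp H j i
      · have : canon H j i j = none := by simp [canon, hl, hsp]
        unfold Bz
        rw [this]
        rw [if_pos ⟨rfl, spec_canon.mpr hsp⟩]
        exact Finset.mem_univ _
      · have : canon H j i j = some ⟨i j, hl⟩ := by simp [canon, hl, hsp]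
        unfold Bz
        rw [this]
        simp
    · have : canon H j i j = none := by simp [canon, hl]
      unfold Bz
      rw [this]
      by_cases hs : spec H j (canon H j i)
      · rw [if_pos ⟨rfl, hs⟩]; exact Finset.mem_univ _
      · rw [if_neg (fun hcond => hs hcond.2)]; simpa using hl
  · by_cases h : i j ∈ H j
    · have : canon H l i j = some ⟨i j, h⟩ := by simp [canon, hj, h]
      unfold Bz
      rw [this]
      simp
    · have : canon H l i j = none := by simp [canon, hj, h]
      unfold Bz
      rw [this]
      rw [if_neg (fun hc => hj hc.1)]
      simpa using h

lemma kept_canon : kept H l (canon H l i) := by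
  by_cases hl : i l ∈ H l
  · by_cases hsp : sp H l i
    · exact ⟨l, Or.inl rfl, by simp [canon, hl, hsp]⟩
    · unfold sp at hsp
      push_neg at hsp
      obtain ⟨j, hj, hij, hcard⟩ := hsp
      exact ⟨j, Or.inr hcard, (canon_none_iff hj).mpr hij⟩
  · exact ⟨l, Or.inl rfl, by simp [canon, hl]⟩

lemma covers_some {z : Pat H} {j : Fin p} {c : {c : Fin d // c ∈ H j}}
    (hz : z j = some c) (hc : covers H l z i) : i j = c.1 := by
  have := hc j
  unfold Bz at this
  rw [hz] at this
  simpa using this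

lemma covers_none_not_mem {z : Pat H} {j : Fin p} (hj : j ≠ l)
    (hz : z j = none) (hc : covers H l z i) : i j ∉ H j := by
  have := hc j
  unfold Bz at this
  rw [hz, if_neg (fun hcond => hj hcond.1)] at this
  simpa using this

/-- Uniqueness: a kept pattern covering `i` is the canonical one. -/
lemma eq_canon {z : Pat H} (hk : kept H l z) (hc : covers H l z i) :
    z = canon H l i := by
  -- first: for j ≠ l, z j = none ↔ i j ∉ H j
  have hne : ∀ j : Fin p, j ≠ l → z j = canon H l i j := by
    intro j hj
    cases hz : z j with
    | some c =>
      have hij := covers_some hz hc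
      have : i j ∈ H j := hij ▸ c.2
      simp only [canon, dif_neg hj, dif_pos this]
      congr 1
      exact Subtype.ext hij.symm
    | none =>
      have := covers_none_not_mem hj hz hc
      exact ((canon_none_iff hj).mpr this).symm
  have hfree : ∀ j : Fin p, j ≠ l → (z j = none ↔ i j ∉ H j) := by
    intro j hj
    rw [hne j hj]
    exact canon_none_iff hj
  have hspec : spec H l z ↔ sp H l i := by
    constructor
    · intro hs j hj hij; exact hs j hj ((hfree j hj).mpr hij)
    · intro hs j hj hn; exact hs j hj ((hfree j hj).mp hn)
  funext j
  by_cases hj : j = l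
  · subst hj
    by_cases hl : i j ∈ H j
    · by_cases hsp : sp H j i
      · -- z j must be none
        have hcanon : canon H j i j = none := by simp [canon, hl, hsp]
        rw [hcanon]
        cases hz : z j with
        | none => rfl
        | some c =>
          exfalso
          obtain ⟨j₀, hj₀, hz₀⟩ := hk
          have hj₀j : j₀ ≠ j := by
            intro h; rw [h, hz] at hz₀; exact absurd hz₀ (Option.some_ne_none _)
          rcases hj₀ with h | h
          · exact hj₀j h
          · exact h (hsp j₀ hj₀j ((hfree j₀ hj₀j).mp hz₀))
      · have hcanon : canon H j i j = some ⟨i j, hl⟩ := by simp [canon, hl, hsp]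
        rw [hcanon]
        cases hz : z j with
        | none =>
          exfalso
          have hns : ¬ spec H j z := fun h => hsp (hspec.mp h)
          have := hc j
          unfold Bz at this
          rw [hz, if_neg (fun hcond => hns hcond.2)] at this
          simp at this
          exact this hl
        | some c =>
          have hij := covers_some hz hc
          congr 1
          exact Subtype.ext hij.symm
    · have hcanon : canon H j i j = none := by simp [canon, hl]
      rw [hcanon]
      cases hz : z j with
      | none => rfl
      | some c =>
        exfalso
        exact hl ((covers_some hz hc) ▸ c.2)
  · exact hne j hj

end canon

end ParafacAux

namespace ParafacAux

variable {p d : ℕ}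

lemma card_option_subtype {X : Type*} [Fintype X] [DecidableEq X] (P : Prop) [Decidable P] :
    Fintype.card {o : Option X // P → o ≠ none} =
      if P then Fintype.card X else Fintype.card X + 1 := by
  by_cases hP : P
  · rw [if_pos hP]
    have e : {o : Option X // P → o ≠ none} ≃ {o : Option X // ¬ (o = none)} :=
      Equiv.subtypeEquivRight (by intro o; constructor
                                  · intro h; exact h hP
                                  · intro h _; exact h)
    rw [Fintype.card_congr e, Fintype.card_subtype_compl, Fintype.card_option,
      Fintype.card_subtype_eq]
    omega
  · rw [if_neg hP]
    have e : {o : Option X // P → o ≠ none} ≃ Option X :=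
      Equiv.subtypeUnivEquiv (fun o h => absurd h hP)
    rw [Fintype.card_congr e, Fintype.card_option]

lemma card_kept (H : Fin p → Finset (Fin d)) (l : Fin p) :
    Fintype.card {z : Pat H // kept H l z} =
      ∏ j : Fin p, ((H j).card + 1) -
        (∏ j ∈ Finset.univ.filter (fun j : Fin p => j ≠ l ∧ (H j).card = d - 1),
            ((H j).card + 1)) *
          ∏ j ∈ (Finset.univ.filter (fun j : Fin p => j ≠ l ∧ (H j).card = d - 1))ᶜ,
            (H j).card := by
  classical
  have hcardPat : Fintype.card (Pat H) = ∏ j : Fin p, ((H j).card + 1) := by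
    rw [Fintype.card_pi]
    congr 1
    funext j
    rw [Fintype.card_option, Fintype.card_coe]
  -- complement count
  have e1 : {z : Pat H // ¬ kept H l z} ≃
      {z : Pat H // ∀ j, (j = l ∨ (H j).card ≠ d - 1) → z j ≠ none} := by
    apply Equiv.subtypeEquivRight
    intro z
    unfold kept
    push_neg
    constructor
    · intro h j hj hn; exact (h j hj hn).elim
    · intro h j hj hn; exact (h j hj) hn
  have e2 : {z : Pat H // ∀ j, (j = l ∨ (H j).card ≠ d - 1) → z j ≠ none} ≃
      ∀ j : Fin p, {o : Option {c : Fin d // c ∈ H j} // (j = l ∨ (H j).card ≠ d - 1) → o ≠ none} :=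
    Equiv.subtypePiEquivPi
      (p := fun (j : Fin p) (o : Option {c : Fin d // c ∈ H j}) =>
        (j = l ∨ (H j).card ≠ d - 1) → o ≠ none)
  have hcompl : Fintype.card {z : Pat H // ¬ kept H l z} =
      (∏ j ∈ Finset.univ.filter (fun j : Fin p => j ≠ l ∧ (H j).card = d - 1),
          ((H j).card + 1)) *
        ∏ j ∈ (Finset.univ.filter (fun j : Fin p => j ≠ l ∧ (H j).card = d - 1))ᶜ,
          (H j).card := by
    rw [Fintype.card_congr (e1.trans e2), Fintype.card_pi]
    have hterm : ∀ j : Fin p,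
        Fintype.card {o : Option {c : Fin d // c ∈ H j} // (j = l ∨ (H j).card ≠ d - 1) → o ≠ none}
          = if (j ≠ l ∧ (H j).card = d - 1) then ((H j).card + 1) else (H j).card := by
      intro j
      rw [card_option_subtype, Fintype.card_coe]
      by_cases h : j ≠ l ∧ (H j).card = d - 1
      · rw [if_pos h, if_neg]
        push_neg
        exact ⟨fun hl => absurd hl h.1, h.2⟩
      · rw [if_neg h, if_pos]
        push_neg at h
        by_cases hjl : j = l
        · exact Or.inl hjl
        · exact Or.inr (h hjl)
    rw [Finset.prod_congr rfl (fun j _ => hterm j), Finset.prod_ite]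
    congr 1
    rw [Finset.compl_filter]
  have htotal : Fintype.card {z : Pat H // kept H l z} =
      Fintype.card (Pat H) - Fintype.card {z : Pat H // ¬ kept H l z} := by
    have := Fintype.card_subtype_compl (fun z : Pat H => kept H l z)
    have hadd := Fintype.card_subtype_compl (fun z : Pat H => ¬ kept H l z)
    have e : {z : Pat H // ¬ ¬ kept H l z} ≃ {z : Pat H // kept H l z} :=
      Equiv.subtypeEquivRight (fun z => not_not)
    rw [Fintype.card_congr e.symm, hadd]
  rw [htotal, hcardPat, hcompl]

end ParafacAux

namespace ParafacAux

section core

variable {p d : ℕ}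
  {H : Fin p → Finset (Fin d)} {l : Fin p} {z : Pat H}
  {θ : Finset (Fin p) → (Fin p → Fin d) → ℝ}

/-- Pairwise vanishing: an interaction containing two varying coordinates vanishes
on the box. -/
lemma pv
    (hwh : ∀ (E F : Finset (Fin p)) (i i' : Fin p → Fin d),
      E ⊆ F → θ E i = 0 → (∀ j ∈ E, i' j = i j) → θ F i' = 0)
    (hH : ∀ (E : Finset (Fin p)) (i : Fin p → Fin d),
      2 ≤ E.card → θ E i ≠ 0 → ∃ j ∈ E, i j ∈ H j)
    {x : Fin p → Fin d} (hx : ∀ j, x j ∈ Bz H l z j)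
    {E : Finset (Fin p)} {j j' : Fin p}
    (hjE : j ∈ E) (hj'E : j' ∈ E) (hne : j ≠ j')
    (hv : varz H l z j) (hv' : varz H l z j') : θ E x = 0 := by
  have hns : ¬ spec H l z := not_spec_of_varz hv hv' hne
  have ha : x j ∉ H j := not_mem_H_of_varz hv hns (hx j)
  have ha' : x j' ∉ H j' := not_mem_H_of_varz hv' hns (hx j')
  have hpair : θ {j, j'} x = 0 := by
    by_contra h
    have hcard : 2 ≤ ({j, j'} : Finset (Fin p)).card := le_of_eq (Finset.card_pair hne).symm
    obtain ⟨k, hk, hmem⟩ := hH {j, j'} x hcard h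
    rcases Finset.mem_insert.mp hk with rfl | hk'
    · exact ha hmem
    · rw [Finset.mem_singleton.mp hk'] at hmem
      exact ha' hmem
  exact hwh {j, j'} E x x
    (Finset.insert_subset hjE (Finset.singleton_subset_iff.mpr hj'E)) hpair (fun _ _ => rfl)

/-- Each kept pattern carries a rank-one nonnegative tensor matching `π` on its cells. -/
lemma rank_one
    (hdep : ∀ (E : Finset (Fin p)) (i i' : Fin p → Fin d),
      (∀ j ∈ E, i j = i' j) → θ E i = θ E i')
    (hwh : ∀ (E F : Finset (Fin p)) (i i' : Fin p → Fin d),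
      E ⊆ F → θ E i = 0 → (∀ j ∈ E, i' j = i j) → θ F i' = 0)
    (hH : ∀ (E : Finset (Fin p)) (i : Fin p → Fin d),
      2 ≤ E.card → θ E i ≠ 0 → ∃ j ∈ E, i j ∈ H j)
    (hd : 1 ≤ d) (z : Pat H) :
    ∃ lam : (j : Fin p) → Fin d → ℝ, (∀ j c, 0 ≤ lam j c) ∧
      ∀ i : Fin p → Fin d, (∏ j : Fin p, lam j (i j)) =
        if covers H l z i then loglinTensor (d := fun _ => d) θ i else 0 := by
  classical
  by_cases hb : ∃ b : Fin p → Fin d, ∀ j, b j ∈ Bz H l z j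
  case neg =>
    refine ⟨fun _ _ => 0, fun _ _ => le_refl 0, fun i => ?_⟩
    have hnc : ¬ covers H l z i := fun hc => hb ⟨i, hc⟩
    rw [if_neg hnc]
    exact Finset.prod_eq_zero (Finset.mem_univ l) rfl
  case pos =>
    obtain ⟨b, hbmem⟩ := hb
    set Vr : Finset (Fin p) := Finset.univ.filter (varz H l z) with hVr
    set m : Finset (Fin p) → Fin p := fun E =>
      if h : (E ∩ Vr).Nonempty then (E ∩ Vr).min' h else l with hm
    have hZpos : (0:ℝ) < ∑ i' : Fin p → Fin d, Real.exp (∑ E : Finset (Fin p), θ E i') := by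
      have : Nonempty (Fin p → Fin d) := ⟨fun _ => ⟨0, hd⟩⟩
      exact Finset.sum_pos (fun i' _ => Real.exp_pos _) Finset.univ_nonempty
    set Zc : ℝ := ∑ i' : Fin p → Fin d, Real.exp (∑ E : Finset (Fin p), θ E i') with hZ
    set g : Fin p → Fin d → ℝ := fun j c =>
      ∑ E ∈ Finset.univ.filter (fun E => (E ∩ Vr).Nonempty ∧ m E = j),
        θ E (Function.update b j c) with hg
    set C : ℝ := ∑ E ∈ Finset.univ.filter (fun E => E ∩ Vr = ∅), θ E b with hC
    set lam : (j : Fin p) → Fin d → ℝ := fun j c =>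
      (if c ∈ Bz H l z j then (1:ℝ) else 0) *
      (if varz H l z j then Real.exp (g j c) else 1) *
      (if j = l then Real.exp C / Zc else 1) with hlam
    refine ⟨lam, ?_, ?_⟩
    · intro j c
      rw [hlam]
      refine mul_nonneg (mul_nonneg ?_ ?_) ?_ <;> split
      · exact zero_le_one
      · exact le_refl 0
      · exact (Real.exp_pos _).le
      · exact zero_le_one
      · exact div_nonneg (Real.exp_pos _).le hZpos.le
      · exact zero_le_one
    · intro i
      by_cases hcov : covers H l z i
      · -- the key additivity identity
        have hnotvar : ∀ j : Fin p, ¬ varz H l z j → i j = b j := fun j hj =>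
          eq_of_not_varz hd hj (hcov j) (hbmem j)
        have hupd : ∀ j : Fin p, ∀ j'' : Fin p,
            Function.update b j (i j) j'' ∈ Bz H l z j'' := by
          intro j j''
          by_cases h : j'' = j
          · subst h; rw [Function.update_self]; exact hcov j''
          · rw [Function.update_of_ne h]; exact hbmem j''
        have key : (∑ E : Finset (Fin p), θ E i) = C + ∑ j ∈ Vr, g j (i j) := by
          have hsplit := Finset.sum_filter_add_sum_filter_not Finset.univ
            (fun E : Finset (Fin p) => E ∩ Vr = ∅) (fun E => θ E i)
          have part1 : ∑ E ∈ Finset.univ.filter (fun E : Finset (Fin p) => E ∩ Vr = ∅),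
              θ E i = C := by
            rw [hC]
            refine Finset.sum_congr rfl (fun E hE => ?_)
            refine hdep E i b (fun j hj => ?_)
            have hEVr : E ∩ Vr = ∅ := (Finset.mem_filter.mp hE).2
            refine hnotvar j (fun hv => ?_)
            have : j ∈ E ∩ Vr := Finset.mem_inter.mpr
              ⟨hj, Finset.mem_filter.mpr ⟨Finset.mem_univ _, hv⟩⟩
            rw [hEVr] at this
            exact absurd this (Finset.notMem_empty j)
          have part2 : ∑ E ∈ Finset.univ.filter (fun E : Finset (Fin p) => ¬ E ∩ Vr = ∅),
              θ E i = ∑ j ∈ Vr, g j (i j) := by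
            have hfe : Finset.univ.filter (fun E : Finset (Fin p) => ¬ E ∩ Vr = ∅) =
                Finset.univ.filter (fun E : Finset (Fin p) => (E ∩ Vr).Nonempty) :=
              Finset.filter_congr (fun E _ => (Finset.nonempty_iff_ne_empty).symm)
            rw [hfe]
            have hmaps : ∀ E ∈ Finset.univ.filter
                (fun E : Finset (Fin p) => (E ∩ Vr).Nonempty), m E ∈ Vr := by
              intro E hE
              have hne := (Finset.mem_filter.mp hE).2
              rw [hm]
              simp only [dif_pos hne]
              exact (Finset.mem_inter.mp ((E ∩ Vr).min'_mem hne)).2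
            rw [← Finset.sum_fiberwise_of_maps_to hmaps (fun E => θ E i)]
            refine Finset.sum_congr rfl (fun j hjVr => ?_)
            simp only [hg]
            rw [Finset.filter_filter]
            refine Finset.sum_congr rfl (fun E hE => ?_)
            obtain ⟨-, hEne, hmE⟩ := Finset.mem_filter.mp hE
            have hjmem : j ∈ E ∩ Vr := by
              rw [← hmE, hm]
              simp only [dif_pos hEne]
              exact (E ∩ Vr).min'_mem hEne
            have hjE : j ∈ E := (Finset.mem_inter.mp hjmem).1
            by_cases hone : E ∩ Vr ⊆ {j}
            · refine hdep E i (Function.update b j (i j)) (fun j' hj' => ?_)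
              by_cases h : j' = j
              · subst h; rw [Function.update_self]
              · rw [Function.update_of_ne h]
                refine hnotvar j' (fun hv => ?_)
                have : j' ∈ E ∩ Vr := Finset.mem_inter.mpr
                  ⟨hj', Finset.mem_filter.mpr ⟨Finset.mem_univ _, hv⟩⟩
                exact h (Finset.mem_singleton.mp (hone this))
            · obtain ⟨j', hj'mem, hj'ne⟩ := Finset.not_subset.mp hone
              have hj'E : j' ∈ E := (Finset.mem_inter.mp hj'mem).1
              have hj'ne' : j' ≠ j := fun h => hj'ne (Finset.mem_singleton.mpr h)
              have hvj : varz H l z j :=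
                (Finset.mem_filter.mp (Finset.mem_inter.mp hjmem).2).2
              have hvj' : varz H l z j' :=
                (Finset.mem_filter.mp (Finset.mem_inter.mp hj'mem).2).2
              rw [pv hwh hH hcov hjE hj'E (Ne.symm hj'ne') hvj hvj',
                pv hwh hH (hupd j) hjE hj'E (Ne.symm hj'ne') hvj hvj']
          rw [← hsplit, part1, part2]
        rw [if_pos hcov]
        have hlam2 : ∀ j : Fin p, lam j (i j) =
            (if i j ∈ Bz H l z j then (1:ℝ) else 0) *
            (if varz H l z j then Real.exp (g j (i j)) else 1) *
            (if j = l then Real.exp C / Zc else 1) := fun j => rfl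
        rw [Finset.prod_congr rfl (fun j _ => hlam2 j)]
        rw [Finset.prod_mul_distrib, Finset.prod_mul_distrib]
        have h1 : ∏ j : Fin p, (if i j ∈ Bz H l z j then (1:ℝ) else 0) = 1 :=
          Finset.prod_eq_one (fun j _ => if_pos (hcov j))
        have h2 : ∏ j : Fin p, (if varz H l z j then Real.exp (g j (i j)) else 1)
            = Real.exp (∑ j ∈ Vr, g j (i j)) := by
          rw [Real.exp_sum, hVr, ← Finset.prod_filter]
        have h3 : ∏ j : Fin p, (if j = l then Real.exp C / Zc else 1) = Real.exp C / Zc := by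
          rw [Finset.prod_ite_eq' Finset.univ l (fun _ => Real.exp C / Zc)]
          simp
        rw [h1, h2, h3, one_mul]
        have hπ : loglinTensor (d := fun _ => d) θ i =
            Real.exp (∑ E : Finset (Fin p), θ E i) / Zc := rfl
        rw [hπ, key, Real.exp_add]
        ring
      · rw [if_neg hcov]
        unfold covers at hcov
        push_neg at hcov
        obtain ⟨j, hj⟩ := hcov
        refine Finset.prod_eq_zero (Finset.mem_univ j) ?_
        show (if i j ∈ Bz H l z j then (1:ℝ) else 0) *
            (if varz H l z j then Real.exp (g j (i j)) else 1) *
            (if j = l then Real.exp C / Zc else 1) = 0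
        rw [if_neg hj, zero_mul, zero_mul]

end core

end ParafacAux


open ParafacAux

/-- Second part of Theorem 2 (the tight bound): if `π` is the `d^p` probability tensor of
a weakly hierarchical log-linear model `θ` with `C_θ^{(j)} ≠ ∅` for all `j`, then for
every cover `H ∈ ℋ` of the nonzero interactions and every variable `l`, with
`W_l = {j ≠ l : |H_j| = d - 1}` and `W̄_l = V \ W_l`, the nonnegative PARAFAC rank of `π`
is at most
`∏_{j∈V} (|H_j|+1) − (∏_{j∈W_l} (|H_j|+1)) ⬝ (∏_{j∈W̄_l} |H_j|)`.
(Hence the rank is at most the minimum of this bound over `H ∈ ℋ` and `l ∈ V`.) -/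
theorem parafacRank_le_tight_bound {p d : ℕ}
    (θ : Finset (Fin p) → (Fin p → Fin d) → ℝ)
    (hdep : ∀ (E : Finset (Fin p)) (i i' : Fin p → Fin d),
      (∀ j ∈ E, i j = i' j) → θ E i = θ E i')
    (hwh : ∀ (E F : Finset (Fin p)) (i i' : Fin p → Fin d),
      E ⊆ F → θ E i = 0 → (∀ j ∈ E, i' j = i j) → θ F i' = 0)
    (hC : ∀ j : Fin p, ∃ j' : Fin p, j' ≠ j ∧ ∃ x : Fin p → Fin d, θ {j, j'} x ≠ 0)
    (H : Fin p → Finset (Fin d))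
    (hH : ∀ (E : Finset (Fin p)) (i : Fin p → Fin d),
      2 ≤ E.card → θ E i ≠ 0 → ∃ j ∈ E, i j ∈ H j)
    (l : Fin p) :
    parafacRank (d := fun _ => d) (loglinTensor (d := fun _ => d) θ) ≤
      ∏ j : Fin p, ((H j).card + 1) -
        (∏ j ∈ Finset.univ.filter (fun j : Fin p => j ≠ l ∧ (H j).card = d - 1),
            ((H j).card + 1)) *
          ∏ j ∈ (Finset.univ.filter (fun j : Fin p => j ≠ l ∧ (H j).card = d - 1))ᶜ,
            (H j).card := by
  classical
  rcases Nat.eq_zero_or_pos d with hd0 | hd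
  · -- degenerate case: empty domain
    subst hd0
    have h0 : IsParafacDecomp (d := fun _ => (0:ℕ))
        (loglinTensor (d := fun _ => (0:ℕ)) θ) 0 :=
      ⟨fun h => h.elim0, fun h => h.elim0, fun i => (i l).elim0⟩
    exact le_trans (Nat.sInf_le h0) (Nat.zero_le _)
  · set K := {z : Pat H // kept H l z} with hK
    choose lam hlam0 hlamval using
      fun z : K => rank_one (l := l) hdep hwh hH hd z.1
    have hdecomp : ∀ i : Fin p → Fin d,
        loglinTensor (d := fun _ => d) θ i = ∑ z : K, ∏ j : Fin p, lam z j (i j) := by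
      intro i
      have hstep : ∀ z : K, (∏ j : Fin p, lam z j (i j)) =
          if covers H l z.1 i then loglinTensor (d := fun _ => d) θ i else 0 :=
        fun z => hlamval z i
      rw [Finset.sum_congr rfl (fun z _ => hstep z)]
      rw [Finset.sum_eq_single_of_mem (⟨canon H l i, kept_canon⟩ : K) (Finset.mem_univ _)]
      · rw [if_pos covers_canon]
      · intro z _ hz
        rw [if_neg (fun hc => hz (Subtype.ext (eq_canon z.2 hc)))]
    have hdec : IsParafacDecomp (d := fun _ => d)
        (loglinTensor (d := fun _ => d) θ) (Fintype.card K) := by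
      refine ⟨fun h => lam ((Fintype.equivFin K).symm h), fun h j c => hlam0 _ _ _, fun i => ?_⟩
      rw [hdecomp i]
      exact (Equiv.sum_comp (Fintype.equivFin K).symm
        (fun z => ∏ j : Fin p, lam z j (i j))).symm
    calc parafacRank (d := fun _ => d) (loglinTensor (d := fun _ => d) θ)
        ≤ Fintype.card K := Nat.sInf_le hdec
      _ = _ := card_kept H l
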